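/- Let m_2, m_3 be positive integers. Then c_0^{m_2,m_3} > 0 and c_2^{m_2,m_3} > 0; moreover, if m_3 ≤ m_2 − 1 then c_1^{m_2,m_3} ≥ 0. -/

import Mathlib

/-- `P k = (k+1/2)(k-1/2)⋯(3/2)(1/2) = (2k+1)!!/2^(k+1)`. -/
noncomputable def P (k : ℕ) : ℝ := ∏ i ∈ Finset.range (k + 1), ((i : ℝ) + 1 / 2)

/-- The combinatorial coefficient `c_p^{m₂,m₃}` from the paper. -/
noncomputable def c (m2 m3 p : ℕ) : ℝ :=
  (∑ i ∈ Finset.Icc (p - m2) (min m2 p),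
      ((2 : ℝ) ^ (2 * i) * P (m3 + i)
            / ((Nat.factorial (2 * i)) * (Nat.factorial (m2 - i)))
        - P (m3 - 1) / (2 * (Nat.factorial i) * (Nat.factorial (m2 - i)))) *
      ((2 : ℝ) ^ (2 * (p : ℤ) - 2 * (i : ℤ) - 1)
            * (2 * (m2 : ℝ) + 2 * (i : ℝ) - 2 * (p : ℝ) + 1) * P (m3 + p - i - 1)
            / ((Nat.factorial (2 * p - 2 * i)) * (Nat.factorial (m2 + i - p)))
        - P (m3 - 1) / (2 * (Nat.factorial (p - i)) * (Nat.factorial (m2 + i - p)))))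
  - ∑ i ∈ Finset.Ico (p - m2) (min m2 p),
      (2 : ℝ) ^ (2 * p) * P (m3 + i) * P (m3 + p - i - 1)
        / ((Nat.factorial (2 * i + 1)) * (Nat.factorial (2 * p - 2 * i - 1))
            * (Nat.factorial (m2 - i - 1)) * (Nat.factorial (m2 + i - p)))

lemma P_pos (k : ℕ) : 0 < P k := by
  unfold P
  exact Finset.prod_pos (fun i _ => by positivity)

lemma P_succ (k : ℕ) : P (k + 1) = P k * ((k : ℝ) + 3 / 2) := by
  unfold P
  rw [Finset.prod_range_succ]
  push_cast
  ring

lemma c0_eq (a b : ℕ) :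
    c (a+1) (b+1) 0 = (a+1) * (b+1) * (P b)^2 / ((Nat.factorial (a+1) : ℝ))^2 := by
  unfold c
  have h1 : (0 : ℕ) - (a+1) = 0 := by omega
  have h2 : min (a+1) 0 = 0 := by omega
  rw [h1, h2]
  simp only [Finset.Icc_self, Finset.sum_singleton, Finset.Ico_self, Finset.sum_empty,
    sub_zero]
  norm_num
  rw [show b + 1 + 0 = b + 1 from rfl, P_succ]
  have hf : ((Nat.factorial (a+1) : ℝ)) ≠ 0 := by positivity
  push_cast
  field_simp
  ring

lemma c1_eq (a b : ℕ) :
    c (a+1) (b+1) 1 = (a+1) * (b+1) * ((a:ℝ) - b - 1) * (P b)^2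
      / ((Nat.factorial (a+1) : ℝ))^2 := by
  unfold c
  have h1 : (1 : ℕ) - (a+1) = 0 := by omega
  have h2 : min (a+1) 1 = 1 := by omega
  rw [h1, h2]
  rw [show Finset.Icc (0:ℕ) 1 = {0, 1} from rfl, show Finset.Ico (0:ℕ) 1 = {0} from rfl]
  rw [Finset.sum_pair (by norm_num), Finset.sum_singleton]
  norm_num
  rw [P_succ (b+1), P_succ b, Nat.factorial_succ]
  have hf : ((Nat.factorial a : ℝ)) ≠ 0 := by positivity
  push_cast
  field_simp
  ring

lemma c2_eq (a b : ℕ) :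
    c (a+1) (b+1) 2 = (a+1) * (b+1) *
      (((b:ℝ)+2)^2 + ((a:ℝ)+1)*((b:ℝ)+1)*((b:ℝ)+2) - ((a:ℝ)+1) + ((a:ℝ)+1)^2*((b:ℝ)+2))
      * (P b)^2 / ((Nat.factorial (a+1) : ℝ))^2 := by
  match a with
  | 0 =>
    unfold c
    rw [show (2:ℕ) - (0+1) = 1 from rfl, show min (0+1) 2 = 1 from rfl]
    rw [Finset.Icc_self, Finset.sum_singleton, Finset.Ico_self, Finset.sum_empty, sub_zero]
    norm_num
    rw [show b + 2 = b + 1 + 1 from rfl, P_succ (b+1), P_succ b]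
    push_cast
    field_simp
    ring
  | (t+1) =>
    unfold c
    rw [show (2:ℕ) - (t+1+1) = 0 by omega, show min (t+1+1) 2 = 2 by omega]
    rw [show Finset.Icc (0:ℕ) 2 = {0, 1, 2} from rfl, show Finset.Ico (0:ℕ) 2 = {0, 1} from rfl]
    rw [Finset.sum_insert (by norm_num), Finset.sum_pair (by norm_num),
      Finset.sum_pair (by norm_num)]
    norm_num
    rw [show t + 1 + 1 - 2 = t from rfl, show t + 1 + 1 + 1 - 2 = t + 1 from rfl,
      show b + 1 + 2 = b + 1 + 1 + 1 from rfl, show b + 2 = b + 1 + 1 from rfl,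
      P_succ (b+1+1), P_succ (b+1), P_succ b,
      Nat.factorial_succ (t+1), Nat.factorial_succ t]
    have hf : ((Nat.factorial t : ℝ)) ≠ 0 := by positivity
    push_cast
    field_simp
    ring

theorem stmt_5 (m2 m3 : ℕ) (hm2 : 1 ≤ m2) (hm3 : 1 ≤ m3) :
    0 < c m2 m3 0 ∧ 0 < c m2 m3 2 ∧ (m3 ≤ m2 - 1 → 0 ≤ c m2 m3 1) := by
  obtain ⟨a, rfl⟩ : ∃ a, m2 = a + 1 := ⟨m2 - 1, by omega⟩
  obtain ⟨b, rfl⟩ : ∃ b, m3 = b + 1 := ⟨m3 - 1, by omega⟩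
  have hP : (0:ℝ) < P b := P_pos b
  have hF : (0:ℝ) < ((Nat.factorial (a+1) : ℝ)) := by positivity
  have ha : (0:ℝ) ≤ (a:ℝ) := Nat.cast_nonneg a
  have hb : (0:ℝ) ≤ (b:ℝ) := Nat.cast_nonneg b
  refine ⟨?_, ?_, ?_⟩
  · rw [c0_eq]
    apply div_pos _ (pow_pos hF 2)
    push_cast
    exact mul_pos (mul_pos (by positivity) (by positivity)) (pow_pos hP 2)
  · rw [c2_eq]
    apply div_pos _ (pow_pos hF 2)
    have hB : (0:ℝ) < ((b:ℝ)+2)^2 + ((a:ℝ)+1)*((b:ℝ)+1)*((b:ℝ)+2) - ((a:ℝ)+1)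
        + ((a:ℝ)+1)^2*((b:ℝ)+2) := by nlinarith [mul_nonneg ha hb, mul_nonneg (mul_nonneg ha ha) hb, sq_nonneg ((a:ℝ))]
    push_cast
    exact mul_pos (mul_pos (mul_pos (by positivity) (by positivity)) hB) (pow_pos hP 2)
  · intro h
    rw [c1_eq]
    apply div_nonneg _ (le_of_lt (pow_pos hF 2))
    have hab : (b:ℝ) + 1 ≤ (a:ℝ) := by
      have : b + 1 ≤ a := by omega
      exact_mod_cast this
    push_cast
    apply mul_nonneg (mul_nonneg (mul_nonneg (by positivity) (by positivity)) (by linarith)) (sq_nonneg _)
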